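/- Let s₁, …, sₙ ∈ ℝⁿ be unit vectors with pairwise inner products 1/2, s = Σ s_i, u₀ = s/‖s‖, and let u be a unit vector with ⟨u, s_i⟩ ≥ 0 for all i. If ⟨s − (n+1)s_j, u⟩ ≥ 0 for some j, then ⟨s_j, u⟩ ≤ √(n/(2(n+1))) · ⟨u₀, u⟩. -/

import Mathlib

open scoped RealInnerProductSpace

/-- In the regular simplex setup (unit vectors with pairwise inner products
`1/2`, `s = ∑ s i`, `u₀ = s/‖s‖`), if `u` is a unit vector with `⟨u, s i⟩ ≥ 0` for all `i`
and `⟨s − (n+1)·s j, u⟩ ≥ 0`, then `⟨s j, u⟩ ≤ √(n/(2(n+1)))·⟨u₀, u⟩`. -/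
theorem upper_facet_vertex_inner_bound {n : ℕ}
    (s : Fin n → EuclideanSpace ℝ (Fin n))
    (hnorm : ∀ i, ‖s i‖ = 1)
    (hinner : ∀ i j, i ≠ j → ⟪s i, s j⟫ = 1 / 2)
    (u : EuclideanSpace ℝ (Fin n)) (hu : ‖u‖ = 1)
    (hnonneg : ∀ i, 0 ≤ ⟪u, s i⟫) (j : Fin n)
    (hupper : 0 ≤ ⟪(∑ i, s i) - ((n : ℝ) + 1) • s j, u⟫) :
    ⟪s j, u⟫ ≤ Real.sqrt ((n : ℝ) / (2 * ((n : ℝ) + 1))) *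
      ⟪‖∑ i, s i‖⁻¹ • ∑ i, s i, u⟫ := by
  have hn : 0 < n := Nat.pos_of_ne_zero (by rintro rfl; exact j.elim0)
  have hn1 : (0:ℝ) < (n:ℝ) + 1 := by positivity
  -- norm of the sum
  have hij : ∀ i k : Fin n, ⟪s i, s k⟫ = if i = k then 1 else 1/2 := by
    intro i k
    by_cases h : i = k
    · subst h; rw [real_inner_self_eq_norm_sq, hnorm i]; norm_num
    · simp [h, hinner i k h]
  have hS2 : ‖∑ i, s i‖^2 = (n:ℝ) * ((n:ℝ) + 1) / 2 := by
    rw [← real_inner_self_eq_norm_sq, inner_sum]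
    simp_rw [sum_inner, hij]
    have : ∀ i : Fin n, (∑ k : Fin n, if k = i then (1:ℝ) else 1/2)
        = (n:ℝ)/2 + 1/2 := by
      intro i
      have : (∑ k : Fin n, if k = i then (1:ℝ) else 1/2)
          = ∑ k : Fin n, ((1/2 : ℝ) + if k = i then 1/2 else 0) := by
        apply Finset.sum_congr rfl; intro k _; by_cases h : k = i <;> simp [h] <;> norm_num
      rw [this, Finset.sum_add_distrib]
      simp
      ring
    simp_rw [this]
    simp
    ring
  have hSnorm : ‖∑ i, s i‖ = Real.sqrt ((n:ℝ) * ((n:ℝ) + 1) / 2) := by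
    rw [← hS2, Real.sqrt_sq (norm_nonneg _)]
  have hkey : Real.sqrt ((n : ℝ) / (2 * ((n : ℝ) + 1))) * ‖∑ i, s i‖⁻¹
      = ((n:ℝ) + 1)⁻¹ := by
    rw [hSnorm, ← Real.sqrt_inv, ← Real.sqrt_mul (by positivity)]
    rw [show ((n:ℝ) / (2 * ((n:ℝ)+1))) * ((n:ℝ) * ((n:ℝ)+1) / 2)⁻¹
        = (((n:ℝ)+1)^2)⁻¹ by field_simp]
    rw [Real.sqrt_inv, Real.sqrt_sq hn1.le]
  have hA : ((n:ℝ) + 1) * ⟪s j, u⟫ ≤ ⟪∑ i, s i, u⟫ := by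
    have := hupper
    rw [inner_sub_left, real_inner_smul_left] at this
    linarith
  rw [real_inner_smul_left, ← mul_assoc, hkey]
  have h2 := mul_le_mul_of_nonneg_left hA (by positivity : (0:ℝ) ≤ ((n:ℝ)+1)⁻¹)
  rw [← mul_assoc, inv_mul_cancel₀ hn1.ne', one_mul] at h2
  exact h2
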